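/- The limit lim_{q→∞} (1/q) Σ_{m ∈ B_q^d \ {0}} |m|^{-d} exists, is finite and positive, and equals ∫_{[-1,1]^d \ [-1/2,1/2]^d} |x|^{-d} dx, where B_q^d = [-2^{q-1}, 2^{q-1}-1]^d ⊂ ℤ^d. -/

import Mathlib

open scoped BigOperators

/-- Euclidean norm of a lattice point `m ∈ ℤ^d`. -/
noncomputable def enormZ {d : ℕ} (m : Fin d → ℤ) : ℝ :=
  Real.sqrt (∑ i, ((m i : ℝ))^2)

/-- `M_q^t(m) = Σ_{β ∈ ℤ^d} |m + 2^q β|^{-2t}`; terms with `m + 2^q β = 0` vanish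
since `0^{-2t} = 0` for the real power with `-2t ≠ 0`, which encodes the omission
of the `β`-term producing `0` in the definition from the paper. -/
noncomputable def Mq (d q : ℕ) (t : ℝ) (m : Fin d → ℤ) : ℝ :=
  ∑' β : Fin d → ℤ, enormZ (fun i => m i + 2^q * β i) ^ (-(2*t))

/-- The box `B_q^d = [-2^{q-1}, 2^{q-1}-1]^d ⊂ ℤ^d`. -/
noncomputable def Bqset (d q : ℕ) : Finset (Fin d → ℤ) :=
  Fintype.piFinset (fun _ => Finset.Icc (-(2:ℤ)^(q-1)) ((2:ℤ)^(q-1) - 1))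
open Filter

/-- Euclidean norm on `ℝ^d`. -/
noncomputable def enormR {d : ℕ} (y : Fin d → ℝ) : ℝ :=
  Real.sqrt (∑ i, (y i)^2)

open Filter MeasureTheory Set
open scoped ENNReal NNReal Topology

namespace Stmt7

variable {d : ℕ}

lemma enormR_nonneg (x : Fin d → ℝ) : 0 ≤ enormR x := Real.sqrt_nonneg _

lemma abs_le_enormR (x : Fin d → ℝ) (i : Fin d) : |x i| ≤ enormR x := by
  rw [← Real.sqrt_sq_eq_abs]
  exact Real.sqrt_le_sqrt (Finset.single_le_sum (f := fun i => (x i)^2)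
    (fun i _ => sq_nonneg _) (Finset.mem_univ i))

lemma enormR_le_sqrt (x : Fin d → ℝ) (h : ∀ i, |x i| ≤ 1) : enormR x ≤ Real.sqrt d := by
  apply Real.sqrt_le_sqrt
  calc ∑ i, (x i)^2 ≤ ∑ _i : Fin d, 1 :=
        Finset.sum_le_sum (fun i _ => by
          calc (x i)^2 = |x i|^2 := (sq_abs _).symm
            _ ≤ 1 := by nlinarith [h i, abs_nonneg (x i)])
    _ = d := by simp

lemma continuous_enormR : Continuous (enormR (d := d)) := by
  unfold enormR; fun_prop

lemma enormR_smul (c : ℝ) (hc : 0 ≤ c) (x : Fin d → ℝ) :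
    enormR (fun i => c * x i) = c * enormR x := by
  unfold enormR
  rw [← Real.sqrt_sq hc, ← Real.sqrt_mul (sq_nonneg c), Finset.mul_sum]
  exact congrArg Real.sqrt (Finset.sum_congr rfl fun i _ => by
    simp only []
    rw [mul_pow, Real.sq_sqrt (sq_nonneg c)])

lemma enorm_eq (m : Fin d → ℤ) : enormZ m = enormR (fun i => (m i : ℝ)) := rfl

lemma enorm_pos {m : Fin d → ℤ} (hm : m ≠ 0) : 0 < enormZ m := by
  rw [Function.ne_iff] at hm
  obtain ⟨i, hi⟩ := hm
  refine Real.sqrt_pos.2 (Finset.sum_pos' (fun j _ => sq_nonneg _) ⟨i, Finset.mem_univ i, ?_⟩)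
  have : (m i : ℝ) ≠ 0 := by exact_mod_cast hi
  positivity

/-- The integrand. -/
noncomputable def f (d : ℕ) (x : Fin d → ℝ) : ℝ := enormR x ^ (-(d:ℝ))

/-- compact region containing everything. -/
def K (d : ℕ) : Set (Fin d → ℝ) :=
  (univ.pi fun _ => Icc (-1:ℝ) 1) ∩ enormR ⁻¹' (Ici (1/2))

lemma isCompact_K : IsCompact (K d) :=
  (isCompact_univ_pi fun _ => isCompact_Icc).inter_right
    (isClosed_Ici.preimage continuous_enormR)

lemma continuousOn_f : ContinuousOn (f d) (K d) := by
  intro x hx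
  apply ContinuousAt.continuousWithinAt
  apply ContinuousAt.rpow_const continuous_enormR.continuousAt
  left
  have : (1:ℝ)/2 ≤ enormR x := hx.2
  linarith

lemma measurable_f : Measurable (f d) := by
  unfold f enormR; fun_prop

lemma f_le_on_K {x : Fin d → ℝ} (hx : x ∈ K d) : f d x ≤ ((1:ℝ)/2) ^ (-(d:ℝ)) :=
  Real.rpow_le_rpow_of_nonpos (by norm_num) hx.2 (by simp)

lemma f_nonneg (x : Fin d → ℝ) : 0 ≤ f d x := Real.rpow_nonneg (enormR_nonneg x) _

lemma le_f_on_K {x : Fin d → ℝ} (hx : x ∈ K d) :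
    (Real.sqrt d) ^ (-(d:ℝ)) ≤ f d x := by
  have h1 : (1:ℝ)/2 ≤ enormR x := hx.2
  apply Real.rpow_le_rpow_of_nonpos (by linarith)
  · apply enormR_le_sqrt
    intro i
    have := hx.1 i (Set.mem_univ i)
    simp only [Set.mem_Icc] at this
    rw [abs_le]; exact this
  · simp

/-- The half-open annulus. -/
def A' (d : ℕ) : Set (Fin d → ℝ) :=
  (univ.pi fun _ => Ico (-1:ℝ) 1) \ (univ.pi fun _ => Ico (-(1:ℝ)/2) (1/2))

/-- The closed annulus from the statement. -/
def A (d : ℕ) : Set (Fin d → ℝ) :=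
  (univ.pi fun _ => Icc (-1:ℝ) 1) \ (univ.pi fun _ => Icc (-(1:ℝ)/2) (1/2))

lemma A_subset_K : A d ⊆ K d := by
  rintro x ⟨h1, h2⟩
  constructor
  · intro i _
    exact h1 i (Set.mem_univ i)
  · simp only [Set.mem_pi, Set.mem_univ, forall_true_left, true_implies, Set.mem_Icc,
      not_forall] at h2
    obtain ⟨i, hi⟩ := h2
    have : (1:ℝ)/2 ≤ |x i| := by
      rcases not_and_or.1 hi with h | h <;> push_neg at h
      · exact le_abs.2 (Or.inr (by linarith))
      · exact le_abs.2 (Or.inl (by linarith))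
    exact le_trans this (abs_le_enormR x i)

/-- Dyadic half-open cell with corner `m / 2^j`, side `1/2^j`. -/
def cell (d j : ℕ) (m : Fin d → ℤ) : Set (Fin d → ℝ) :=
  univ.pi fun i => Ico ((m i : ℝ) / 2^j) ((m i + 1 : ℝ) / 2^j)

lemma mem_cell_iff {j : ℕ} {m : Fin d → ℤ} {x : Fin d → ℝ} :
    x ∈ cell d j m ↔ ∀ i, (m i : ℝ) ≤ 2^j * x i ∧ 2^j * x i < m i + 1 := by
  have hN : (0:ℝ) < 2^j := by positivity
  simp only [cell, Set.mem_pi, Set.mem_univ, true_implies, Set.mem_Ico]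
  refine forall_congr' fun i => ?_
  rw [div_le_iff₀ hN, lt_div_iff₀ hN]
  constructor <;> rintro ⟨h1, h2⟩ <;> constructor <;> nlinarith

lemma measurableSet_cell (j : ℕ) (m : Fin d → ℤ) : MeasurableSet (cell d j m) :=
  MeasurableSet.univ_pi fun i => measurableSet_Ico

lemma volume_cell (j : ℕ) (m : Fin d → ℤ) :
    volume (cell d j m) = ENNReal.ofReal ((1:ℝ)/2^j) ^ d := by
  rw [cell, volume_pi_pi]
  have : ∀ i : Fin d, ((m i : ℝ) + 1) / 2^j - (m i : ℝ) / 2^j = 1/2^j := by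
    intro i; field_simp; ring
  simp_rw [Real.volume_Ico, this]
  simp

lemma volume_cell_toReal (j : ℕ) (m : Fin d → ℤ) :
    (volume (cell d j m)).toReal = ((1:ℝ)/2^j) ^ d := by
  rw [volume_cell, ENNReal.toReal_pow, ENNReal.toReal_ofReal (by positivity)]

lemma cell_disjoint (j : ℕ) : ∀ m m' : Fin d → ℤ, m ≠ m' →
    Disjoint (cell d j m) (cell d j m') := by
  intro m m' hne
  rw [Set.disjoint_left]
  intro x hx hx'
  apply hne
  funext i
  rw [mem_cell_iff] at hx hx'
  have h1 := hx i; have h2 := hx' i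
  have e1 : ⌊(2:ℝ)^j * x i⌋ = m i := Int.floor_eq_iff.2 ⟨h1.1, by exact_mod_cast h1.2⟩
  have e2 : ⌊(2:ℝ)^j * x i⌋ = m' i := Int.floor_eq_iff.2 ⟨h2.1, by exact_mod_cast h2.2⟩
  rw [← e1, e2]

/-- The index set for scale `k`. -/
noncomputable def Fk (d k : ℕ) : Finset (Fin d → ℤ) := Bqset d (k+2) \ Bqset d (k+1)

lemma mem_Fk_iff {k : ℕ} {m : Fin d → ℤ} :
    m ∈ Fk d k ↔ (∀ i, -(2:ℤ)^(k+1) ≤ m i ∧ m i ≤ 2^(k+1) - 1) ∧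
      ¬ (∀ i, -(2:ℤ)^k ≤ m i ∧ m i ≤ 2^k - 1) := by
  simp only [Fk, Finset.mem_sdiff, Bqset, Fintype.mem_piFinset, Finset.mem_Icc,
    Nat.add_sub_cancel, Nat.succ_sub_one]

lemma biUnion_cells (k : ℕ) :
    A' d = ⋃ m ∈ Fk d k, cell d (k+1) m := by
  have hN : (0:ℝ) < 2^(k+1) := by positivity
  have h2 : ((2:ℝ)^(k+1)) = 2 * 2^k := by ring
  ext x
  simp only [A', Set.mem_diff, Set.mem_pi, Set.mem_univ, true_implies, Set.mem_Ico,
    Set.mem_iUnion, exists_prop]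
  constructor
  · rintro ⟨hO, hI⟩
    refine ⟨fun i => ⌊(2:ℝ)^(k+1) * x i⌋, mem_Fk_iff.2 ⟨fun i => ⟨?_, ?_⟩, ?_⟩,
      mem_cell_iff.2 fun i => ⟨Int.floor_le _, Int.lt_floor_add_one _⟩⟩
    · rw [Int.le_floor]
      push_cast
      nlinarith [(hO i).1]
    · have : ⌊(2:ℝ)^(k+1) * x i⌋ < 2^(k+1) := by
        rw [Int.floor_lt]
        push_cast
        nlinarith [(hO i).2]
      omega
    · push_neg at hI ⊢
      obtain ⟨i, hi⟩ := hI
      refine ⟨i, ?_⟩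
      intro hlow
      by_cases hc : -(1:ℝ)/2 ≤ x i
      · -- then x i ≥ 1/2
        have hxi : (1:ℝ)/2 ≤ x i := by
          by_contra hcon
          exact absurd (hi hc) (by push_neg; linarith)
        have : (2:ℤ)^k ≤ ⌊(2:ℝ)^(k+1) * x i⌋ := by
          rw [Int.le_floor]
          push_cast
          nlinarith
        omega
      · -- x i < -1/2, floor < -2^k, contradict hlow
        push_neg at hc
        have : ⌊(2:ℝ)^(k+1) * x i⌋ < -(2:ℤ)^k := by
          rw [Int.floor_lt]
          push_cast
          nlinarith
        omega
  · rintro ⟨m, hm, hx⟩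
    rw [mem_Fk_iff] at hm
    rw [mem_cell_iff] at hx
    obtain ⟨hbox, hnot⟩ := hm
    constructor
    · intro i
      have h1 := (hx i).1
      have h2 := (hx i).2
      have hb1 : ((-(2:ℤ)^(k+1) : ℤ) : ℝ) ≤ (m i : ℝ) := by exact_mod_cast (hbox i).1
      have hb2 : ((m i : ℝ)) ≤ ((2:ℤ)^(k+1) - 1 : ℤ) := by exact_mod_cast (hbox i).2
      push_cast at hb1 hb2
      constructor <;> nlinarith
    · push_neg at hnot ⊢
      obtain ⟨i, hi⟩ := hnot
      refine ⟨i, fun hlow => ?_⟩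
      have h1 := (hx i).1
      have h2 := (hx i).2
      by_cases hc : -(2:ℤ)^k ≤ m i
      · -- m i ≥ 2^k, so x i ≥ 1/2, contradiction needed: produce 1/2 ≤ x i... goal: 1/2 ≤ x i
        have hge : (2:ℤ)^k ≤ m i := by have := hi hc; omega
        have hge' : ((2:ℝ)^k) ≤ (m i : ℝ) := by exact_mod_cast hge
        nlinarith
      · -- m i ≤ -2^k - 1, so x i < -1/2, contradicting hlow : -1/2 ≤ x i
        push_neg at hc
        have hle : m i ≤ -(2:ℤ)^k - 1 := by omega
        have hle' : (m i : ℝ) ≤ -(2:ℝ)^k - 1 := by exact_mod_cast hle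
        nlinarith

lemma A'_subset_A : A' d ⊆ K d := by
  rintro x ⟨h1, h2⟩
  constructor
  · intro i _
    have := h1 i (Set.mem_univ i)
    simp only [Set.mem_Ico] at this
    exact ⟨this.1, le_of_lt this.2⟩
  · simp only [Set.mem_pi, Set.mem_univ, true_implies, Set.mem_Ico, not_forall] at h2
    obtain ⟨i, hi⟩ := h2
    have : (1:ℝ)/2 ≤ |x i| := by
      rcases not_and_or.1 hi with h | h <;> push_neg at h
      · exact le_abs.2 (Or.inr (by linarith))
      · exact le_abs.2 (Or.inl (by linarith))
    exact le_trans this (abs_le_enormR x i)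

lemma measurableSet_A : MeasurableSet (A d) :=
  ((MeasurableSet.univ_pi fun _ => measurableSet_Icc).diff
    (MeasurableSet.univ_pi fun _ => measurableSet_Icc))

lemma measurableSet_A' : MeasurableSet (A' d) :=
  ((MeasurableSet.univ_pi fun _ => measurableSet_Ico).diff
    (MeasurableSet.univ_pi fun _ => measurableSet_Ico))

lemma null_Icc_diff_Ico (a b : ℝ) (h : a ≤ b) :
    volume ((univ.pi fun _ : Fin d => Icc a b) \ (univ.pi fun _ : Fin d => Ico a b)) = 0 := by
  have hsub : (univ.pi fun _ : Fin d => Ico a b) ⊆ (univ.pi fun _ : Fin d => Icc a b) :=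
    Set.pi_mono fun i _ => Ico_subset_Icc_self
  rw [measure_diff hsub ((MeasurableSet.univ_pi fun _ => measurableSet_Ico).nullMeasurableSet)
    (by
      rw [volume_pi_pi]
      simp only [Real.volume_Ico, Finset.prod_const, Finset.card_univ, Fintype.card_fin]
      exact ENNReal.pow_ne_top ENNReal.ofReal_ne_top)]
  rw [volume_pi_pi, volume_pi_pi]
  simp [Real.volume_Ico, Real.volume_Icc]

lemma A_ae_eq_A' : A d =ᵐ[volume] A' d := by
  rw [MeasureTheory.ae_eq_set]
  have h1 := null_Icc_diff_Ico (d := d) (-1:ℝ) 1 (by norm_num)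
  have h2 := null_Icc_diff_Ico (d := d) (-(1:ℝ)/2) (1/2) (by norm_num)
  constructor
  · refine measure_mono_null (fun x hx => ?_) h1
    obtain ⟨⟨hO, hI⟩, hx'⟩ := hx
    simp only [A', Set.mem_diff, not_and, not_not] at hx'
    refine ⟨hO, fun hO' => ?_⟩
    exact hI (Set.pi_mono (fun i _ => Ico_subset_Icc_self) (hx' hO'))
  · refine measure_mono_null (fun x hx => ?_) h2
    obtain ⟨⟨hO, hI⟩, hx'⟩ := hx
    simp only [A, Set.mem_diff, not_and, not_not] at hx'
    refine ⟨hx' (Set.pi_mono (fun i _ => Ico_subset_Icc_self) hO), hI⟩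

lemma integral_A_eq : ∫ x in A d, f d x = ∫ x in A' d, f d x :=
  setIntegral_congr_set A_ae_eq_A'

lemma volume_A'_lt_top : volume (A' d) < ⊤ := by
  apply lt_of_le_of_lt (measure_mono (Set.diff_subset))
  rw [volume_pi_pi]
  simp [Real.volume_Ico]

lemma integrableOn_f_of_subset {s : Set (Fin d → ℝ)} (hs : s ⊆ K d)
    (hms : MeasurableSet s) (hvol : volume s ≠ ⊤) : IntegrableOn (f d) s volume := by
  apply Measure.integrableOn_of_bounded hvol measurable_f.aestronglyMeasurable
    (M := ((1:ℝ)/2) ^ (-(d:ℝ)))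
  filter_upwards [MeasureTheory.ae_restrict_mem hms] with x hx
  rw [Real.norm_eq_abs, abs_of_nonneg (f_nonneg x)]
  exact f_le_on_K (hs hx)

lemma A_subset_box : A d ⊆ univ.pi fun _ => Icc (-1:ℝ) 1 := Set.diff_subset

lemma volume_A_lt_top : volume (A d) < ⊤ := by
  apply lt_of_le_of_lt (measure_mono (A_subset_box (d := d)))
  rw [volume_pi_pi]
  simp only [Real.volume_Icc, Finset.prod_const, Finset.card_univ, Fintype.card_fin]
  exact ENNReal.pow_lt_top ENNReal.ofReal_lt_top

lemma volume_A_pos (hd : 1 ≤ d) : 0 < volume (A d) := by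
  have hsub : (univ.pi fun _ : Fin d => Icc (-(1:ℝ)/2) (1/2)) ⊆
      (univ.pi fun _ : Fin d => Icc (-1:ℝ) 1) :=
    Set.pi_mono fun i _ => Icc_subset_Icc (by norm_num) (by norm_num)
  have hv : volume (A d) = (ENNReal.ofReal 2) ^ d - 1 := by
    rw [A, measure_diff hsub
      ((MeasurableSet.univ_pi fun _ => measurableSet_Icc).nullMeasurableSet)
      (by
        rw [volume_pi_pi]
        simp only [Real.volume_Icc, Finset.prod_const, Finset.card_univ, Fintype.card_fin]
        exact ENNReal.pow_ne_top ENNReal.ofReal_ne_top)]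
    rw [volume_pi_pi, volume_pi_pi]
    simp only [Real.volume_Icc, Finset.prod_const, Finset.card_univ, Fintype.card_fin]
    norm_num
  rw [hv]
  have h2 : (ENNReal.ofReal 2) = 2 := by
    rw [ENNReal.ofReal_ofNat]
  rw [h2]
  have : (2:ℝ≥0∞) ≤ 2 ^ d := by
    calc (2:ℝ≥0∞) = 2^1 := (pow_one 2).symm
    _ ≤ 2^d := pow_le_pow_right₀ one_le_two hd
  exact tsub_pos_of_lt (lt_of_lt_of_le ENNReal.one_lt_two this)

lemma integral_A_pos (hd : 1 ≤ d) : 0 < ∫ x in A d, f d x := by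
  set c : ℝ := (Real.sqrt d) ^ (-(d:ℝ)) with hc
  have hd0 : (0:ℝ) < d := by exact_mod_cast hd
  have hcpos : 0 < c := Real.rpow_pos_of_pos (Real.sqrt_pos.2 hd0) _
  have hK := A_subset_K (d := d)
  have hint : IntegrableOn (f d) (A d) volume :=
    integrableOn_f_of_subset hK measurableSet_A volume_A_lt_top.ne
  have hconst : IntegrableOn (fun _ : Fin d → ℝ => c) (A d) volume := by
    exact integrableOn_const volume_A_lt_top.ne
  have hle : ∫ x in A d, (fun _ => c) x ≤ ∫ x in A d, f d x := by
    apply setIntegral_mono_on hconst hint measurableSet_A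
    intro x hx
    exact le_f_on_K (hK hx)
  rw [setIntegral_const] at hle
  have hvolpos : 0 < (volume (A d)).toReal :=
    ENNReal.toReal_pos (volume_A_pos hd).ne' volume_A_lt_top.ne
  calc (0:ℝ) < (volume (A d)).toReal • c := by
        rw [smul_eq_mul]; positivity
    _ ≤ _ := hle

lemma zero_mem_Bqset (q : ℕ) : (0 : Fin d → ℤ) ∈ Bqset d q := by
  simp only [Bqset, Fintype.mem_piFinset, Pi.zero_apply, Finset.mem_Icc]
  intro i
  have h1 : (0:ℤ) < 2^(q-1) := pow_pos (by norm_num) _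
  omega

lemma ne_zero_of_mem_Fk {k : ℕ} {m : Fin d → ℤ} (hm : m ∈ Fk d k) : m ≠ 0 := by
  rintro rfl
  exact (Finset.mem_sdiff.1 hm).2 (zero_mem_Bqset (k+1))

lemma cell_subset_K {k : ℕ} {m : Fin d → ℤ} (hm : m ∈ Fk d k) :
    cell d (k+1) m ⊆ K d := by
  refine subset_trans ?_ (A'_subset_A (d := d))
  rw [biUnion_cells k]
  exact Set.subset_biUnion_of_mem hm

lemma corner_mem_cell {k : ℕ} (m : Fin d → ℤ) :
    (fun i => (m i : ℝ) / 2^(k+1)) ∈ cell d (k+1) m := by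
  rw [mem_cell_iff]
  intro i
  have hN : ((2:ℝ)^(k+1)) ≠ 0 := by positivity
  rw [mul_div_cancel₀ _ hN]
  constructor
  · exact le_refl _
  · linarith

lemma term_eq {k : ℕ} {m : Fin d → ℤ} (hm : m ∈ Fk d k) :
    enormZ m ^ (-(d:ℝ)) = ((1:ℝ)/2^(k+1))^d * f d (fun i => (m i : ℝ) / 2^(k+1)) := by
  have hN : (0:ℝ) < 2^(k+1) := by positivity
  have he : 0 < enormZ m := enorm_pos (ne_zero_of_mem_Fk hm)
  have hrw : (fun i => (m i : ℝ) / 2^(k+1)) = fun i => (1/2^(k+1)) * (m i : ℝ) := by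
    funext i; rw [one_div, inv_mul_eq_div]
  rw [f, hrw, enormR_smul _ (by positivity) _, ← enorm_eq,
    Real.mul_rpow (by positivity) he.le, ← mul_assoc,
    ← Real.rpow_natCast ((1:ℝ)/2^(k+1)) d, ← Real.rpow_add (by positivity),
    add_neg_cancel, Real.rpow_zero, one_mul]

lemma card_Fk_le (k : ℕ) : (Fk d k).card ≤ (2^(k+2))^d := by
  calc (Fk d k).card ≤ (Bqset d (k+2)).card := Finset.card_le_card Finset.sdiff_subset
    _ = (2^(k+2))^d := by
        rw [Bqset, Fintype.card_piFinset]
        simp only [Int.card_Icc, Nat.succ_sub_one, Finset.prod_const, Finset.card_univ,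
          Fintype.card_fin]
        congr 1
        have h1 : ((2:ℤ)^(k+1) - 1 + 1 - -2^(k+1)) = ((2^(k+2) : ℕ) : ℤ) := by push_cast; ring
        rw [h1, Int.toNat_natCast]

lemma tendsto_u :
    Tendsto (fun k => ∑ m ∈ Fk d k, enormZ m ^ (-(d:ℝ))) atTop (𝓝 (∫ x in A' d, f d x)) := by
  rw [Metric.tendsto_atTop]
  intro ε hε
  set C : ℝ := (2:ℝ)^d with hCdef
  have hC : 0 < C := by positivity
  set ε' : ℝ := ε / (C + 1) with hε'def
  have hε' : 0 < ε' := by positivity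
  have huc := (isCompact_K (d := d)).uniformContinuousOn_of_continuous continuousOn_f
  rw [Metric.uniformContinuousOn_iff] at huc
  obtain ⟨δ, hδ, hucd⟩ := huc ε' hε'
  obtain ⟨n0, hn0⟩ := exists_pow_lt_of_lt_one hδ (by norm_num : (1:ℝ)/2 < 1)
  refine ⟨n0, fun k hk => ?_⟩
  have hN : (0:ℝ) < 2^(k+1) := by positivity
  set hm : ℝ := 1/2^(k+1) with hmdef
  have hmesh : hm < δ := by
    calc hm = ((1:ℝ)/2)^(k+1) := by rw [hmdef, div_pow, one_pow]
      _ ≤ ((1:ℝ)/2)^n0 := pow_le_pow_of_le_one (by norm_num) (by norm_num) (by omega)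
      _ < δ := hn0
  -- cells are measurable, disjoint, f integrable
  have hvolcell : ∀ m : Fin d → ℤ, volume (cell d (k+1) m) ≠ ⊤ := fun m => by
    rw [volume_cell]
    exact ENNReal.pow_ne_top ENNReal.ofReal_ne_top
  have hintcell : ∀ m ∈ Fk d k, IntegrableOn (f d) (cell d (k+1) m) volume := fun m hm' =>
    integrableOn_f_of_subset (cell_subset_K hm') (measurableSet_cell _ _) (hvolcell m)
  have hI : ∫ x in A' d, f d x = ∑ m ∈ Fk d k, ∫ x in cell d (k+1) m, f d x := by
    rw [biUnion_cells k]
    exact integral_biUnion_finset _ (fun m _ => measurableSet_cell _ _)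
      (fun m _ m' _ hne => cell_disjoint _ m m' hne) hintcell
  -- per-cell estimate
  have hcell : ∀ m ∈ Fk d k,
      |enormZ m ^ (-(d:ℝ)) - ∫ x in cell d (k+1) m, f d x| ≤ ε' * hm^d := by
    intro m hm'
    set xm : Fin d → ℝ := fun i => (m i : ℝ) / 2^(k+1) with hxm
    have hxmK : xm ∈ K d := cell_subset_K hm' (corner_mem_cell m)
    have hconst : ∫ x in cell d (k+1) m, (fun _ => f d xm) x = hm^d * f d xm := by
      rw [setIntegral_const, measureReal_def, volume_cell_toReal, smul_eq_mul]
    have hsub : enormZ m ^ (-(d:ℝ)) - ∫ x in cell d (k+1) m, f d x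
        = ∫ x in cell d (k+1) m, (f d xm - f d x) := by
      rw [integral_sub (integrableOn_const (C := f d xm) (hvolcell m) (by simp))
        (hintcell m hm')]
      rw [term_eq hm', ← hxm]
      congr 1
      rw [← hconst]
    rw [hsub, ← Real.norm_eq_abs]
    calc ‖∫ x in cell d (k+1) m, (f d xm - f d x)‖
        ≤ ε' * (volume (cell d (k+1) m)).toReal := by
          apply norm_setIntegral_le_of_norm_le_const (lt_top_iff_ne_top.2 (hvolcell m))
          · intro x hx
            have hxK : x ∈ K d := cell_subset_K hm' hx
            have hdist : dist xm x < δ := by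
              rw [dist_pi_lt_iff hδ]
              intro i
              rw [mem_cell_iff] at hx
              obtain ⟨ha, hb⟩ := hx i
              rw [Real.dist_eq, abs_sub_comm, abs_of_nonneg (by
                rw [hxm]
                rw [sub_nonneg, div_le_iff₀ hN]
                linarith)]
              have hkey : x i - xm i < hm := by
                rw [hxm, hmdef]
                rw [sub_lt_iff_lt_add, ← add_div, lt_div_iff₀ hN]
                linarith
              linarith [hmesh]
            have := hucd xm hxmK x hxK hdist
            rw [Real.dist_eq] at this
            rw [Real.norm_eq_abs]
            exact this.le
      _ = ε' * hm^d := by rw [volume_cell_toReal]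
  -- assemble
  rw [Real.dist_eq, hI, ← Finset.sum_sub_distrib]
  have h22 : ((2:ℝ)^(k+2)) * hm = 2 := by
    rw [hmdef]
    rw [pow_succ]
    field_simp
  calc |∑ m ∈ Fk d k, (enormZ m ^ (-(d:ℝ)) - ∫ x in cell d (k+1) m, f d x)|
      ≤ ∑ m ∈ Fk d k, |enormZ m ^ (-(d:ℝ)) - ∫ x in cell d (k+1) m, f d x| :=
        Finset.abs_sum_le_sum_abs _ _
    _ ≤ ∑ _m ∈ Fk d k, ε' * hm^d := Finset.sum_le_sum hcell
    _ = (Fk d k).card * (ε' * hm^d) := by rw [Finset.sum_const, nsmul_eq_mul]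
    _ ≤ (((2^(k+2))^d : ℕ) : ℝ) * (ε' * hm^d) := by
        apply mul_le_mul_of_nonneg_right _ (by positivity)
        exact_mod_cast Nat.cast_le.2 (card_Fk_le (d := d) k)
    _ = ε' * C := by
        push_cast
        rw [hCdef]
        calc ((2:ℝ)^(k+2))^d * (ε' * hm^d) = ε' * (((2:ℝ)^(k+2) * hm)^d) := by
              rw [mul_pow]; ring
          _ = ε' * 2^d := by rw [h22]
    _ < ε := by
        have hcc : ε' * (C+1) = ε := div_mul_cancel₀ _ (by positivity)
        nlinarith [hε', hC]

/-- The partial sum. -/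
noncomputable def S (d q : ℕ) : ℝ := ∑ m ∈ (Bqset d q).erase 0, enormZ m ^ (-(d:ℝ))

lemma Bqset_mono (k : ℕ) : Bqset d (k+1) ⊆ Bqset d (k+2) := by
  apply Fintype.piFinset_subset
  intro a
  apply Finset.Icc_subset_Icc
  · simp only [Nat.succ_sub_one]
    have : (2:ℤ)^k ≤ 2^(k+1) := pow_le_pow_right₀ one_le_two (by omega)
    omega
  · simp only [Nat.succ_sub_one]
    have : (2:ℤ)^k ≤ 2^(k+1) := pow_le_pow_right₀ one_le_two (by omega)
    omega

lemma erase_sdiff_eq (k : ℕ) :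
    (Bqset d (k+2)).erase 0 \ (Bqset d (k+1)).erase 0 = Fk d k := by
  ext m
  simp only [Finset.mem_sdiff, Finset.mem_erase, Fk, not_and]
  constructor
  · rintro ⟨⟨hne, h2⟩, h3⟩
    exact ⟨h2, h3 hne⟩
  · rintro ⟨h2, h3⟩
    have hne : m ≠ 0 := by
      rintro rfl
      exact h3 (zero_mem_Bqset (k+1))
    exact ⟨⟨hne, h2⟩, fun _ => h3⟩

lemma S_diff (k : ℕ) : S d (k+2) - S d (k+1) = ∑ m ∈ Fk d k, enormZ m ^ (-(d:ℝ)) := by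
  rw [← erase_sdiff_eq k, Finset.sum_sdiff_eq_sub (Finset.erase_subset_erase _ (Bqset_mono k))]
  rfl

lemma tendsto_S_diff :
    Tendsto (fun j => S d (j+1) - S d j) atTop (𝓝 (∫ x in A' d, f d x)) := by
  rw [← Filter.tendsto_add_atTop_iff_nat 1]
  have : (fun j : ℕ => S d (j+1+1) - S d (j+1)) =
      fun k => ∑ m ∈ Fk d k, enormZ m ^ (-(d:ℝ)) := by
    funext k
    exact S_diff k
  rw [this]
  exact tendsto_u

lemma main_tendsto :
    Tendsto (fun q : ℕ => (1/(q:ℝ)) * S d q) atTop (𝓝 (∫ x in A' d, f d x)) := by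
  have hces := (tendsto_S_diff (d := d)).cesaro
  have hS0 : Tendsto (fun n : ℕ => (1/(n:ℝ)) * S d 0) atTop (𝓝 0) := by
    have := tendsto_one_div_atTop_nhds_zero_nat.mul_const (S d 0)
    simpa using this
  have hsum := hces.add hS0
  rw [add_zero] at hsum
  have heq : (fun q : ℕ => (1/(q:ℝ)) * S d q) =
      fun q : ℕ => ((q:ℝ)⁻¹ * ∑ j ∈ Finset.range q, (S d (j+1) - S d j)) + (1/(q:ℝ)) * S d 0 := by
    funext q
    rw [Finset.sum_range_sub (fun j => S d j)]
    rw [one_div]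
    ring
  rw [heq]
  exact hsum

end Stmt7

theorem stmt7 (d : ℕ) (hd : 1 ≤ d) :
    0 < ∫ x in (Set.univ.pi (fun _ : Fin d => Set.Icc (-(1:ℝ)) 1)) \
          (Set.univ.pi (fun _ : Fin d => Set.Icc (-(1:ℝ)/2) (1/2))),
        enormR x ^ (-(d:ℝ)) ∧
    Tendsto
      (fun q : ℕ =>
        (1/(q:ℝ)) * ∑ m ∈ (Bqset d q).erase 0, enormZ m ^ (-(d:ℝ)))
      atTop
      (nhds (∫ x in (Set.univ.pi (fun _ : Fin d => Set.Icc (-(1:ℝ)) 1)) \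
          (Set.univ.pi (fun _ : Fin d => Set.Icc (-(1:ℝ)/2) (1/2))),
        enormR x ^ (-(d:ℝ)))) := by
  constructor
  · exact Stmt7.integral_A_pos hd
  · have h1 : (∫ x in Stmt7.A d, Stmt7.f d x) = ∫ x in Stmt7.A' d, Stmt7.f d x :=
      Stmt7.integral_A_eq
    show Tendsto (fun q : ℕ => (1/(q:ℝ)) * Stmt7.S d q) atTop (𝓝 (∫ x in Stmt7.A d, Stmt7.f d x))
    rw [h1]
    exact Stmt7.main_tendsto
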